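/- Let (C,d) be a nonarchimedean normed chain complex over K, where the absolute value of K is surjective onto the positive reals. If the O-module H(C_{>0}) is torsion-free (its only torsion class is 0), then the boundary depth vanishes: β(C,d) = 0. -/

import Mathlib

open scoped ENNReal

open Classical in
/-- The boundary depth `β(C,d) ∈ [0,∞]` of a norm-nonincreasing differential `d` on a
nonarchimedean normed chain complex `C`. -/
noncomputable def boundaryDepth {C : Type*} [NormedAddCommGroup C] (d : C → C) : ℝ≥0∞ :=
  if ∀ x, d x = 0 then 0
  else
    ⨆ x ∈ {x : C | x ≠ 0 ∧ ∃ y, d y = x},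
      ⨅ y ∈ {y : C | d y = x}, ENNReal.ofReal (Real.log ‖y‖ - Real.log ‖x‖)

/-- If, for a nonarchimedean normed chain complex `(C,d)` over a complete
nonarchimedean field `K` whose absolute value is surjective onto the positive reals, the
`O`-module `H(C_{>0}) = (ker d ∩ C_{>0}) / d(C_{>0})` is torsion-free (every torsion class
is zero, i.e. every cycle `x` with `‖x‖ < 1` such that `a • x ∈ d(C_{>0})` for some nonzero
`a` with `‖a‖ ≤ 1` already lies in `d(C_{>0})`), then the boundary depth vanishes. -/
theorem boundaryDepth_eq_zero_of_torsionFree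
    {K : Type*} [NormedField K] [IsUltrametricDist K] [CompleteSpace K]
    (hsurj : ∀ r : ℝ, 0 < r → ∃ a : K, ‖a‖ = r)
    {C : Type*} [NormedAddCommGroup C] [NormedSpace K C] [CompleteSpace C]
    [IsUltrametricDist C]
    (d : C →L[K] C) (hd2 : ∀ x, d (d x) = 0) (hd1 : ∀ x, ‖d x‖ ≤ ‖x‖)
    (htf : ∀ x : C, ‖x‖ < 1 → d x = 0 →
      (∃ a : K, a ≠ 0 ∧ ‖a‖ ≤ 1 ∧ a • x ∈ ⇑d '' {y : C | ‖y‖ < 1}) →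
      x ∈ ⇑d '' {y : C | ‖y‖ < 1}) :
    boundaryDepth (fun x => d x) = 0 := by
  classical
  unfold boundaryDepth
  split_ifs with h
  · rfl
  · refine le_antisymm ?_ zero_le
    refine ENNReal.le_of_forall_pos_le_add fun ε hε _ => ?_
    rw [zero_add]
    refine iSup₂_le fun x hx => ?_
    obtain ⟨hx0, y₀, hy₀'⟩ := hx
    have hy₀ : d y₀ = x := hy₀'
    have hxpos : (0:ℝ) < ‖x‖ := norm_pos_iff.mpr hx0
    have hεR : (0:ℝ) < (ε : ℝ) := hε
    -- choose the scaling element a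
    obtain ⟨a, ha⟩ := hsurj (‖x‖⁻¹ * Real.exp (-(ε : ℝ))) (by positivity)
    have hapos : (0:ℝ) < ‖a‖ := by rw [ha]; positivity
    have ha0 : a ≠ 0 := by simpa using hapos.ne'
    have hdx : d x = 0 := by rw [← hy₀]; exact hd2 y₀
    have hdx' : d (a • x) = 0 := by rw [map_smul, hdx, smul_zero]
    have hax : ‖a • x‖ = Real.exp (-(ε : ℝ)) := by
      rw [norm_smul, ha]; field_simp
    have hax1 : ‖a • x‖ < 1 := by
      rw [hax]; exact Real.exp_lt_one_iff.mpr (by linarith)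
    -- choose the torsion element b
    set t : ℝ := ‖a • y₀‖ with ht
    have htnn : (0:ℝ) ≤ t := norm_nonneg _
    obtain ⟨b, hb⟩ := hsurj ((1 + t)⁻¹ / 2) (by positivity)
    have hb0 : b ≠ 0 := by
      have : (0:ℝ) < ‖b‖ := by rw [hb]; positivity
      simpa using this.ne'
    have hb1 : ‖b‖ ≤ 1 := by
      rw [hb]
      have h1 : (1 + t)⁻¹ ≤ 1 := by
        rw [inv_le_one_iff₀]; right; linarith
      linarith
    have hbmem : b • (a • x) ∈ ⇑d '' {y : C | ‖y‖ < 1} := by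
      refine ⟨b • a • y₀, ?_, ?_⟩
      · show ‖b • a • y₀‖ < 1
        rw [norm_smul, hb, ← ht]
        have h1 : t < 1 + t := by linarith
        have h2 : (1 + t)⁻¹ * t < 1 := by
          rw [inv_mul_lt_iff₀ (by linarith : (0:ℝ) < 1 + t)]
          linarith
        calc (1 + t)⁻¹ / 2 * t = (1 + t)⁻¹ * t / 2 := by ring
          _ < 1 := by linarith
      · rw [map_smul, map_smul, hy₀]
    obtain ⟨z, hz1, hz2⟩ := htf (a • x) hax1 hdx' ⟨b, hb0, hb1, hbmem⟩
    have hz1' : ‖z‖ < 1 := hz1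
    -- the good primitive
    have hy : d (a⁻¹ • z) = x := by
      rw [map_smul, hz2, smul_smul, inv_mul_cancel₀ ha0, one_smul]
    refine le_trans (biInf_le (fun y => ENNReal.ofReal (Real.log ‖y‖ - Real.log ‖x‖)) (show d (a⁻¹ • z) = x from hy)) ?_
    have hzne : z ≠ 0 := by
      intro hzz
      apply hx0
      have : a • x = 0 := by rw [← hz2, hzz, map_zero]
      simpa [smul_eq_zero, ha0] using this
    have hzpos : (0:ℝ) < ‖z‖ := norm_pos_iff.mpr hzne
    have hnormy : ‖a⁻¹ • z‖ ≤ ‖a‖⁻¹ := by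
      rw [norm_smul, norm_inv]
      calc ‖a‖⁻¹ * ‖z‖ ≤ ‖a‖⁻¹ * 1 := by
            exact mul_le_mul_of_nonneg_left hz1'.le (by positivity)
        _ = ‖a‖⁻¹ := mul_one _
    have hypos : (0:ℝ) < ‖a⁻¹ • z‖ := by
      rw [norm_smul, norm_inv]; positivity
    have hloga : Real.log (‖a‖⁻¹) = Real.log ‖x‖ + (ε : ℝ) := by
      rw [Real.log_inv, ha, Real.log_mul (by positivity) (Real.exp_pos _).ne',
        Real.log_inv, Real.log_exp]
      ring
    have hlog : Real.log ‖a⁻¹ • z‖ - Real.log ‖x‖ ≤ (ε : ℝ) := by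
      have := Real.log_le_log hypos hnormy
      rw [hloga] at this
      linarith
    calc ENNReal.ofReal (Real.log ‖a⁻¹ • z‖ - Real.log ‖x‖)
        ≤ ENNReal.ofReal (ε : ℝ) := ENNReal.ofReal_le_ofReal hlog
      _ = (ε : ℝ≥0∞) := ENNReal.ofReal_coe_nnreal
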